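/- Let p be a prime with p ≡ 1 (mod 6), and write 4p = r^2 + 27 s^2 with r ≡ 1 (mod 3). Then C(2(p-1)/3, (p-1)/3) ≡ -r (mod p). -/

import Mathlib

open Finset



/-- Uniqueness of the representation `4p = r² + 27s²` with `r ≡ 1 mod 3`. -/
lemma jacobi_rep_unique {p : ℕ} (hp : p.Prime) {r s L M : ℤ}
    (h1 : 4 * (p : ℤ) = r ^ 2 + 27 * s ^ 2) (h2 : 4 * (p : ℤ) = L ^ 2 + 27 * M ^ 2)
    (hr : (3 : ℤ) ∣ r - 1) (hL : (3 : ℤ) ∣ L - 1) : r = L := by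
  have hpI : Prime (p : ℤ) := Nat.prime_iff_prime_int.mp hp
  have hp0 : (0 : ℤ) < p := by exact_mod_cast hp.pos
  have key : (p : ℤ) ∣ (r * M - L * s) * (r * M + L * s) :=
    ⟨4 * (M ^ 2 - s ^ 2), by linear_combination (-(M ^ 2)) * h1 + s ^ 2 * h2⟩
  have cancel : ∀ ε : ℤ, 4 * (p:ℤ) * L = ε * (4 * p) * r → (ε = 1 ∨ ε = -1) → r = L := by
    intro ε hε hε1
    rcases hε1 with rfl | rfl
    · have := mul_left_cancel₀ (a := 4 * (p:ℤ)) (by positivity) (by linarith [hε] : 4*(p:ℤ)*L = 4*(p:ℤ)*r)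
      omega
    · have := mul_left_cancel₀ (a := 4 * (p:ℤ)) (by positivity) (by linarith [hε] : 4*(p:ℤ)*L = 4*(p:ℤ)*(-r))
      omega
  rcases hpI.dvd_mul.mp key with hdvd | hdvd
  all_goals obtain ⟨k, hk⟩ := hdvd
  · -- r*M - L*s = p*k
    have id1 : (r * L + 27 * s * M) ^ 2 + 27 * (r * M - L * s) ^ 2 = 16 * (p:ℤ)^2 := by
      linear_combination (-(L ^ 2 + 27 * M ^ 2)) * h1 - 4 * (p:ℤ) * h2
    have hk0 : k = 0 := by
      by_contra hk0
      have h1k : 1 ≤ k ^ 2 := by nlinarith [Int.one_le_abs hk0, sq_abs k]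
      have id1' : (r * L + 27 * s * M) ^ 2 + 27 * ((p:ℤ) * k) ^ 2 = 16 * (p:ℤ)^2 := by
        rw [← hk]; exact id1
      nlinarith [sq_nonneg (r * L + 27 * s * M), mul_pos hp0 hp0, h1k]
    rw [hk0, mul_zero] at hk
    -- hk : r*M - L*s = 0
    have hsq : (r * L + 27 * s * M - 4 * p) * (r * L + 27 * s * M + 4 * p) = 0 := by
      linear_combination id1 - 27 * (r*M - L*s + 0) * hk
    rcases mul_eq_zero.mp hsq with h | h
    · refine cancel 1 ?_ (Or.inl rfl)
      linear_combination L * h1 + r * h - 27 * s * hk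
    · refine cancel (-1) ?_ (Or.inr rfl)
      linear_combination L * h1 + r * h - 27 * s * hk
  · -- r*M + L*s = p*k
    have id2 : (r * L - 27 * s * M) ^ 2 + 27 * (r * M + L * s) ^ 2 = 16 * (p:ℤ)^2 := by
      linear_combination (-(L ^ 2 + 27 * M ^ 2)) * h1 - 4 * (p:ℤ) * h2
    have hk0 : k = 0 := by
      by_contra hk0
      have h1k : 1 ≤ k ^ 2 := by nlinarith [Int.one_le_abs hk0, sq_abs k]
      have id2' : (r * L - 27 * s * M) ^ 2 + 27 * ((p:ℤ) * k) ^ 2 = 16 * (p:ℤ)^2 := by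
        rw [← hk]; exact id2
      nlinarith [sq_nonneg (r * L - 27 * s * M), mul_pos hp0 hp0, h1k]
    rw [hk0, mul_zero] at hk
    have hsq : (r * L - 27 * s * M - 4 * p) * (r * L - 27 * s * M + 4 * p) = 0 := by
      linear_combination id2 - 27 * (r*M + L*s + 0) * hk
    rcases mul_eq_zero.mp hsq with h | h
    · refine cancel 1 ?_ (Or.inl rfl)
      linear_combination L * h1 + r * h + 27 * s * hk
    · refine cancel (-1) ?_ (Or.inr rfl)
      linear_combination L * h1 + r * h + 27 * s * hk


section ZModSums
variable {p : ℕ} [Fact p.Prime]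

lemma jac_sum_pow_zero {j : ℕ} (h0 : 0 < j) (h1 : j < p - 1) :
    ∑ t : ZMod p, t ^ j = 0 := by
  have := FiniteField.sum_pow_lt_card_sub_one (ZMod p) j (by rwa [ZMod.card])
  exact this

lemma jac_sum_pow_card : ∑ t : ZMod p, t ^ (p - 1) = -1 := by
  have hp2 : 2 ≤ p := (Fact.out : p.Prime).two_le
  have h1 : ∑ t : ZMod p, t ^ (p - 1)
      = ∑ t : ZMod p, ((1 : ZMod p) - if t = 0 then 1 else 0) := by
    refine Finset.sum_congr rfl fun t _ ↦ ?_
    by_cases ht : t = 0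
    · simp [ht, zero_pow (by omega : p - 1 ≠ 0)]
    · simp [ht, ZMod.pow_card_sub_one_eq_one ht]
  rw [h1, Finset.sum_sub_distrib, Finset.sum_boole, Finset.sum_const, card_univ, ZMod.card]
  have : (Finset.filter (fun t : ZMod p => t = 0) Finset.univ).card = 1 := by
    rw [Finset.filter_eq']
    simp
  rw [this]
  simp [ZMod.natCast_self]

/-- power sum vanishes for exponents in `(0, 2(p-1))` not equal to `p-1`. -/
lemma jac_sum_pow_zero' {j : ℕ} (h0 : 0 < j) (hne : j ≠ p - 1) (hub : j < 2 * (p - 1)) :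
    ∑ t : ZMod p, t ^ j = 0 := by
  have hp2 : 2 ≤ p := (Fact.out : p.Prime).two_le
  rcases lt_or_gt_of_ne hne with h | h
  · exact jac_sum_pow_zero h0 h
  · have h1 : ∑ t : ZMod p, t ^ j = ∑ t : ZMod p, t ^ (j - (p - 1)) := by
      refine Finset.sum_congr rfl fun t _ ↦ ?_
      by_cases ht : t = 0
      · rw [ht, zero_pow (by omega), zero_pow (by omega)]
      · have ht2 : t ^ j = t ^ (p - 1) * t ^ (j - (p - 1)) := by
          rw [← pow_add]; congr 1; omega
        rw [ht2, ZMod.pow_card_sub_one_eq_one ht, one_mul]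
    rw [h1]
    exact jac_sum_pow_zero (by omega) (by omega)

lemma jac_expand (e : ℕ) :
    ∑ t : ZMod p, t ^ e * (1 - t) ^ e
      = ∑ k ∈ range (e + 1), ((-1 : ZMod p)) ^ (e - k) * (e.choose k) * ∑ t : ZMod p, t ^ (2 * e - k) := by
  have expand : ∀ t : ZMod p, t ^ e * (1 - t) ^ e
      = ∑ k ∈ range (e + 1), ((-1 : ZMod p)) ^ (e - k) * (e.choose k) * t ^ (2 * e - k) := by
    intro t
    rw [show (1 - t : ZMod p) = 1 + (-t) by ring, add_pow, Finset.mul_sum]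
    refine Finset.sum_congr rfl fun k hk ↦ ?_
    have hk' : k ≤ e := by simpa using Nat.lt_succ_iff.mp (mem_range.mp hk)
    rw [show 2 * e - k = e + (e - k) by omega, pow_add, neg_pow]
    ring
  rw [Finset.sum_congr rfl fun t _ => expand t, Finset.sum_comm]
  refine Finset.sum_congr rfl fun k _ ↦ ?_
  rw [← Finset.mul_sum]

lemma jac_S1 {m : ℕ} (hm0 : 0 < m) (hpm : p - 1 = 3 * m) :
    ∑ t : ZMod p, t ^ m * (1 - t) ^ m = 0 := by
  rw [jac_expand]
  refine Finset.sum_eq_zero fun k hk ↦ ?_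
  have hk' : k ≤ m := by simpa using Nat.lt_succ_iff.mp (mem_range.mp hk)
  rw [jac_sum_pow_zero (by omega) (by omega), mul_zero]

lemma jac_S2 {m : ℕ} (hm0 : 0 < m) (hme : Even m) (hpm : p - 1 = 3 * m) :
    ∑ t : ZMod p, t ^ (2 * m) * (1 - t) ^ (2 * m) = -((2 * m).choose m : ZMod p) := by
  rw [jac_expand]
  rw [Finset.sum_eq_single_of_mem m (by simp; omega)]
  · rw [show 2 * (2 * m) - m = p - 1 by omega, jac_sum_pow_card,
      show 2 * m - m = m by omega, hme.neg_one_pow]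
    ring
  · intro k hk hne
    have hk' : k ≤ 2 * m := by simpa using Nat.lt_succ_iff.mp (mem_range.mp hk)
    rw [jac_sum_pow_zero' (by omega) (by omega) (by omega), mul_zero]

end ZModSums


/-- Sum of `w + w²` over elements whose values are cube roots of unity. -/
lemma jac_three_count {R : Type*} [CommRing R] [IsDomain R] {α : Type*} [DecidableEq R]
    (D : Finset α) (w : α → R) (hw : ∀ t ∈ D, w t ^ 3 = 1) :
    ∑ t ∈ D, (w t + w t ^ 2)
      = 3 * ((D.filter fun t => w t = 1).card : R) - (D.card : R) := by
  have point : ∀ t ∈ D, w t + w t ^ 2 = 3 * (if w t = 1 then 1 else 0) - 1 := by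
    intro t ht
    by_cases h : w t = 1
    · rw [if_pos h, h]; ring
    · rw [if_neg h]
      have h3 := hw t ht
      have hfac : (w t - 1) * (w t ^ 2 + w t + 1) = 0 := by linear_combination h3
      rcases mul_eq_zero.mp hfac with h' | h'
      · exact absurd (sub_eq_zero.mp h') h
      · linear_combination h'
  rw [Finset.sum_congr rfl point, Finset.sum_sub_distrib, ← Finset.mul_sum,
    Finset.sum_boole, Finset.sum_const, nsmul_eq_mul, mul_one]

/-- Every element of `ℤ[μ]` with `μ² = -1 - μ` has the form `a + bμ`. -/
lemma jac_adjoin_decomp {μ : ℂ} (hω : μ ^ 2 = -1 - μ) {z : ℂ}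
    (hz : z ∈ Algebra.adjoin ℤ {μ}) : ∃ a b : ℤ, z = a + b * μ := by
  induction hz using Algebra.adjoin_induction with
  | mem x hx =>
      rw [Set.mem_singleton_iff] at hx
      exact ⟨0, 1, by rw [hx]; push_cast; ring⟩
  | algebraMap r => exact ⟨r, 0, by push_cast; simp⟩
  | add x y hx hy ihx ihy =>
      obtain ⟨a, b, rfl⟩ := ihx; obtain ⟨c, d, rfl⟩ := ihy
      exact ⟨a + c, b + d, by push_cast; ring⟩
  | mul x y hx hy ihx ihy =>
      obtain ⟨a, b, rfl⟩ := ihx; obtain ⟨c, d, rfl⟩ := ihy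
      refine ⟨a * c - b * d, a * d + b * c - b * d, ?_⟩
      push_cast
      linear_combination (b : ℂ) * d * hω


lemma jac_kernel {p : ℕ} [Fact p.Prime] {m : ℕ} (hm0 : 0 < m) (hpm : p - 1 = 3 * m)
    {χ : MulChar (ZMod p) ℂ} (hχord : orderOf χ = 3) {x : ZMod p} (hx : x ≠ 0) :
    (χ x = 1 ↔ x ^ m = 1) := by
  obtain ⟨g, hg⟩ := IsCyclic.exists_generator (α := (ZMod p)ˣ)
  have hgord : orderOf g = p - 1 := by
    rw [orderOf_eq_card_of_forall_mem_zpowers hg, Nat.card_eq_fintype_card, ZMod.card_units]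
  have hχg : orderOf (χ (g : ZMod p)) = 3 := by
    rw [← hχord]
    symm
    rw [orderOf_eq_orderOf_iff]
    intro n
    constructor
    · intro hn
      have := congrArg (fun ψ : MulChar (ZMod p) ℂ => ψ (g : ZMod p)) hn
      simpa [MulChar.pow_apply_coe χ n g, MulChar.one_apply_coe] using this
    · intro hn
      apply MulChar.ext
      intro a
      obtain ⟨k, hk⟩ := (Submonoid.mem_powers_iff a g).mp (mem_powers_iff_mem_zpowers.mpr (hg a))
      rw [MulChar.one_apply_coe, MulChar.pow_apply_coe, ← hk, Units.val_pow_eq_pow_val,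
        map_pow, ← pow_mul, mul_comm, pow_mul, hn, one_pow]
  have hxu : IsUnit x := isUnit_iff_ne_zero.mpr hx
  obtain ⟨k, hk⟩ := (Submonoid.mem_powers_iff hxu.unit g).mp
    (mem_powers_iff_mem_zpowers.mpr (hg hxu.unit))
  have hxval : x = ((g : (ZMod p)ˣ) : ZMod p) ^ k := by
    rw [← hxu.unit_spec, ← hk, Units.val_pow_eq_pow_val]
  have h1 : χ x = 1 ↔ (3:ℕ) ∣ k := by
    rw [hxval, map_pow, ← hχg]
    exact orderOf_dvd_iff_pow_eq_one.symm
  have h2 : x ^ m = 1 ↔ (3:ℕ) ∣ k := by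
    rw [hxval, ← pow_mul, ← Units.val_pow_eq_pow_val, Units.val_eq_one,
      ← orderOf_dvd_iff_pow_eq_one, hgord, hpm, mul_comm k m, mul_comm 3 m]
    exact Nat.mul_dvd_mul_iff_left hm0
  rw [h1, h2]


/-- Jacobi (1837): for a prime `p ≡ 1 (mod 6)` with `4p = r² + 27s²`, `r ≡ 1 (mod 3)`,
`C(2(p-1)/3, (p-1)/3) ≡ -r (mod p)`. -/
theorem jacobi_congruence (p : ℕ) (hp : p.Prime) (hp6 : p % 6 = 1)
    (r s : ℤ) (hrs : 4 * (p : ℤ) = r ^ 2 + 27 * s ^ 2) (hr : r ≡ 1 [ZMOD 3]) :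
    ((Nat.choose (2 * (p - 1) / 3) ((p - 1) / 3) : ℤ)) ≡ -r [ZMOD p] := by
  haveI instF : Fact p.Prime := ⟨hp⟩
  have hp2 : 2 ≤ p := hp.two_le
  have hp7 : 7 ≤ p := by omega
  set m := (p - 1) / 3 with hmdef
  have hpm : p - 1 = 3 * m := by omega
  have hm0 : 0 < m := by omega
  have hme : Even m := Nat.even_iff.mpr (by omega)
  have hgoal2m : 2 * (p - 1) / 3 = 2 * m := by omega
  -- complex primitive cube root of unity
  have hμ := Complex.isPrimitiveRoot_exp 3 (by norm_num)
  set μ := Complex.exp (2 * Real.pi * Complex.I / 3) with hμdef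
  have hμ3 : μ ^ 3 = 1 := hμ.pow_eq_one
  have hμ1 : μ ≠ 1 := hμ.ne_one (by norm_num)
  have hω : μ ^ 2 = -1 - μ := by
    have hfac : (μ - 1) * (μ ^ 2 + μ + 1) = 0 := by linear_combination hμ3
    rcases mul_eq_zero.mp hfac with h | h
    · exact absurd (sub_eq_zero.mp h) hμ1
    · linear_combination h
  -- the cubic character
  have hdvd3 : (3:ℕ) ∣ Fintype.card (ZMod p) - 1 := by rw [ZMod.card]; omega
  obtain ⟨χ, hχord⟩ := MulChar.exists_mulChar_orderOf (ZMod p) hdvd3 hμ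
  have hχ3 : χ ^ 3 = 1 := by rw [← hχord]; exact pow_orderOf_eq_one χ
  have hχ1 : χ ≠ 1 := by
    intro h; rw [h, orderOf_one] at hχord; omega
  have hχχ : χ * χ ≠ 1 := by
    intro h
    have h2 : orderOf χ ∣ 2 := orderOf_dvd_of_pow_eq_one (by rwa [pow_two])
    rw [hχord] at h2; omega
  -- decompose J = A + Bμ
  obtain ⟨z, hzmem, hJz⟩ := exists_jacobiSum_eq_neg_one_add (by norm_num) hχ3 hχ3 hdvd3 hμ
  obtain ⟨c, d, hzcd⟩ := jac_adjoin_decomp hω hzmem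
  set J := jacobiSum χ χ with hJdef
  set A : ℤ := 3 * d - 1 with hA
  set B : ℤ := 3 * d - 3 * c with hB
  have hJAB : J = (A : ℂ) + (B : ℂ) * μ := by
    rw [hJz, hzcd, hA, hB]
    push_cast
    linear_combination ((c : ℂ) - 2 * d) * hω + (d : ℂ) * hμ3
  -- complex conjugation is squaring on cube roots of unity
  have habs : ∀ w : ℂ, w ^ 3 = 1 → (starRingEnd ℂ) w = w ^ 2 := by
    intro w hw
    have hw0 : w ≠ 0 := by intro h; rw [h] at hw; norm_num at hw
    have habs1 : ‖w‖ = 1 := by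
      have h3 : ‖w‖ ^ 3 = 1 := by rw [← norm_pow, hw, norm_one]
      have hnn := norm_nonneg w
      refine le_antisymm ?_ ?_ <;> nlinarith [sq_nonneg (‖w‖ - 1), sq_nonneg (‖w‖ + 1)]
    have h1 : w * (starRingEnd ℂ) w = 1 := by
      rw [Complex.mul_conj, Complex.normSq_eq_norm_sq, habs1]
      norm_num
    exact mul_left_cancel₀ hw0 (by rw [h1, ← hw]; ring)
  have hconjχ : χ.ringHomComp (starRingEnd ℂ) = χ⁻¹ := by
    apply MulChar.ext
    intro a
    have hcube : χ (a : ZMod p) ^ 3 = 1 := by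
      rw [← MulChar.pow_apply_coe, hχ3, MulChar.one_apply_coe]
    rw [MulChar.ringHomComp_apply, MulChar.inv_apply_eq_inv', habs _ hcube]
    exact ((inv_eq_of_mul_eq_one_right (by rw [← pow_succ']; exact hcube)).symm)
  have hJ'c : jacobiSum χ⁻¹ χ⁻¹ = (starRingEnd ℂ) J := by
    rw [← hconjχ, jacobiSum_ringHomComp]
  have hchar : ringChar ℂ ≠ ringChar (ZMod p) := by
    rw [ringChar.eq_zero, ZMod.ringChar_zmod_n]; omega
  have hJJ' : J * jacobiSum χ⁻¹ χ⁻¹ = (p : ℂ) := by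
    have h := jacobiSum_mul_jacobiSum_inv hchar hχ1 hχ1 hχχ
    rwa [ZMod.card] at h
  have hconjμ : (starRingEnd ℂ) μ = μ ^ 2 := habs μ hμ3
  have hconjJ : (starRingEnd ℂ) J = ((A : ℂ) - B) - (B : ℂ) * μ := by
    rw [hJAB, map_add, map_mul, map_intCast, map_intCast, hconjμ, hω]
    push_cast
    ring
  have hnorm : (p : ℤ) = A^2 - A*B + B^2 := by
    have hc : (p:ℂ) = ((A^2 - A*B + B^2 : ℤ) : ℂ) := by
      rw [← hJJ', hJ'c, hconjJ, hJAB]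
      push_cast
      linear_combination (-((B:ℂ))^2) * hω
    exact_mod_cast hc
  -- counting setup
  classical
  set D : Finset (ZMod p) := Finset.univ \ {0, 1} with hD
  have hDmem : ∀ t ∈ D, t ≠ 0 ∧ t ≠ 1 := by
    intro t ht
    have := Finset.mem_sdiff.mp ht
    simpa using this.2
  have hDx : ∀ t ∈ D, t * (1 - t) ≠ 0 := by
    intro t ht
    obtain ⟨h0, h1⟩ := hDmem t ht
    exact mul_ne_zero h0 (sub_ne_zero.mpr (Ne.symm h1))
  have hDcard : (D.card : ℤ) = (p : ℤ) - 2 := by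
    have h01 : ({0, 1} : Finset (ZMod p)) ⊆ Finset.univ := Finset.subset_univ _
    have hc2 : ({0, 1} : Finset (ZMod p)).card = 2 := by
      rw [Finset.card_insert_of_notMem (by simp), Finset.card_singleton]
    have := Finset.card_sdiff_of_subset h01
    rw [hD, this, Finset.card_univ, ZMod.card, hc2]
    have : 2 ≤ p := hp2
    push_cast [Nat.cast_sub (by omega : 2 ≤ p)]
    ring
  -- χ values on D are cube roots of unity
  have hwcubeC : ∀ t ∈ D, (χ (t * (1 - t))) ^ 3 = 1 := by
    intro t ht
    have h0 : IsUnit (t * (1 - t)) := isUnit_iff_ne_zero.mpr (hDx t ht)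
    rw [← MulChar.pow_apply' χ (by norm_num : (3:ℕ) ≠ 0), hχ3, MulChar.one_apply h0]
  have hJD : J = ∑ t ∈ D, χ (t * (1 - t)) := by
    rw [hJdef, jacobiSum_eq_sum_sdiff]
    exact Finset.sum_congr rfl fun t _ => (map_mul χ _ _).symm
  have hJ'D : jacobiSum χ⁻¹ χ⁻¹ = ∑ t ∈ D, (χ (t * (1 - t))) ^ 2 := by
    rw [jacobiSum_eq_sum_sdiff]
    refine Finset.sum_congr rfl fun t ht => ?_
    rw [MulChar.inv_apply_eq_inv', MulChar.inv_apply_eq_inv', ← mul_inv, ← map_mul]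
    exact inv_eq_of_mul_eq_one_right (by rw [← pow_succ']; exact hwcubeC t ht)
  set N := (D.filter fun t => (t * (1 - t)) ^ m = 1).card with hN
  have hfilterEq : (D.filter fun t => χ (t * (1 - t)) = 1)
      = (D.filter fun t => (t * (1 - t)) ^ m = 1) := by
    apply Finset.filter_congr
    intro t ht
    exact jac_kernel hm0 hpm hχord (hDx t ht)
  have hsumC : J + jacobiSum χ⁻¹ χ⁻¹ = 3 * (N : ℂ) - (D.card : ℂ) := by
    rw [hJD, hJ'D, ← Finset.sum_add_distrib,
      jac_three_count D (fun t => χ (t * (1 - t))) hwcubeC, hfilterEq]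
  have hT : 2 * A - B = 3 * (N : ℤ) - (D.card : ℤ) := by
    have hc : ((2 * A - B : ℤ) : ℂ) = 3 * (N : ℂ) - (D.card : ℂ) := by
      rw [← hsumC, hJ'c, hconjJ, hJAB]
      push_cast
      ring
    exact_mod_cast hc
  -- ZMod p side
  have hwcubeZ : ∀ t ∈ D, ((t * (1 - t)) ^ m) ^ 3 = 1 := by
    intro t ht
    rw [← pow_mul, mul_comm m 3, ← hpm]
    exact ZMod.pow_card_sub_one_eq_one (hDx t ht)
  have hsumZ : ∑ t ∈ D, ((t * (1 - t)) ^ m + ((t * (1 - t)) ^ m) ^ 2)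
      = 3 * (N : ZMod p) - (D.card : ZMod p) := by
    rw [jac_three_count D (fun t => (t * (1 - t)) ^ m) hwcubeZ, hN]
  have hS1 := jac_S1 (p := p) hm0 hpm
  have hS2 := jac_S2 (p := p) hm0 hme hpm
  have he1 : ∑ t ∈ D, (t * (1 - t)) ^ m = ∑ t : ZMod p, t ^ m * (1 - t) ^ m := by
    rw [Finset.sum_congr rfl (fun t _ => mul_pow t (1 - t) m)]
    refine Finset.sum_subset (Finset.subset_univ D) fun x _ hx => ?_
    have hx' : x = 0 ∨ x = 1 := by
      by_contra hcon
      push_neg at hcon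
      exact hx (Finset.mem_sdiff.mpr ⟨Finset.mem_univ x, by simp [hcon.1, hcon.2]⟩)
    rcases hx' with rfl | rfl
    · rw [zero_pow (by omega), zero_mul]
    · rw [sub_self, zero_pow (by omega), mul_zero]
  have he2 : ∑ t ∈ D, ((t * (1 - t)) ^ m) ^ 2
      = ∑ t : ZMod p, t ^ (2 * m) * (1 - t) ^ (2 * m) := by
    have hpt : ∀ t : ZMod p, ((t * (1 - t)) ^ m) ^ 2 = t ^ (2 * m) * (1 - t) ^ (2 * m) := by
      intro t
      rw [mul_pow, mul_pow, ← pow_mul, ← pow_mul, mul_comm m 2]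
    rw [Finset.sum_congr rfl (fun t _ => hpt t)]
    refine Finset.sum_subset (Finset.subset_univ D) fun x _ hx => ?_
    have hx' : x = 0 ∨ x = 1 := by
      by_contra hcon
      push_neg at hcon
      exact hx (Finset.mem_sdiff.mpr ⟨Finset.mem_univ x, by simp [hcon.1, hcon.2]⟩)
    rcases hx' with rfl | rfl
    · rw [zero_pow (by omega), zero_mul]
    · rw [sub_self, zero_pow (by omega), mul_zero]
  have hfinal : (((2 * m).choose m : ℤ) : ZMod p) = ((-(2 * A - B) : ℤ) : ZMod p) := by
    have hz1 : (0 : ZMod p) + -(((2 * m).choose m : ZMod p))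
        = 3 * (N : ZMod p) - (D.card : ZMod p) := by
      rw [← hS1, ← hS2, ← he1, ← he2, ← hsumZ, Finset.sum_add_distrib]
    have hz2 : ((3 * (N : ℤ) - (D.card : ℤ) : ℤ) : ZMod p) = 3 * (N : ZMod p) - (D.card : ZMod p) := by
      push_cast
      ring
    rw [← hT] at hz2
    push_cast at hz1 hz2 ⊢
    linear_combination -hz1 + hz2
  -- uniqueness of the representation
  have h4p : 4 * (p : ℤ) = (2 * A - B) ^ 2 + 27 * (d - c) ^ 2 := by
    rw [hA, hB] at hnorm ⊢
    linear_combination 4 * hnorm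
  have hr3 : (3 : ℤ) ∣ r - 1 := by
    have := Int.ModEq.dvd hr
    omega
  have hL3 : (3 : ℤ) ∣ (2 * A - B) - 1 := ⟨d + c - 1, by rw [hA, hB]; ring⟩
  have hrL : r = 2 * A - B := jacobi_rep_unique hp hrs h4p hr3 hL3
  -- conclude
  rw [hgoal2m, ← ZMod.intCast_eq_intCast_iff]
  rw [hrL]
  push_cast at hfinal ⊢
  linear_combination hfinal
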